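/- arXiv:2204.13858 — 2 statements merged into one kernel-verified Lean document; each statement's English description precedes it below -/
import Mathlib

section
/- For permutations π̂ and π* on [n], the expected number of mismatches E[∑_{i∈[n]} 1{π̂_i ≠ π*_i}] equals the sum over k from 2 to n of the sum over all ordered tuples of k distinct indices (i_1,…,i_k) of the probability that π̂_{i_1} = π*_{i_2}, π̂_{i_2} = π*_{i_3}, …, π̂_{i_{k-1}} = π*_{i_k}, and π̂_{i_k} = π*_{i_1}. -/
open MeasureTheory ProbabilityTheory

noncomputable instance (n : ℕ) : MeasurableSpace (Equiv.Perm (Fin n)) := ⊤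

open Equiv Finset
lemma val_finRotate {k : ℕ} (hk : 2 ≤ k) (j : Fin k) :
    ((finRotate k j : Fin k) : ℕ) = (j.val + 1) % k := by
  obtain ⟨k, rfl⟩ : ∃ m, k = m + 1 := ⟨k - 1, by omega⟩
  rw [finRotate_succ_apply, Fin.add_def]
  simp only [Fin.val_mk, Fin.val_one']
  rw [Nat.mod_eq_of_lt (show 1 < k+1 by omega)]

lemma tuple_eq_pow {n k : ℕ} (hk : 2 ≤ k) (σ : Equiv.Perm (Fin n)) (i : Fin k → Fin n)
    (hcond : ∀ j, σ (i j) = i (finRotate k j)) (j : Fin k) :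
    i j = (σ ^ (j : ℕ)) (i ⟨0, by omega⟩) := by
  obtain ⟨j, hj⟩ := j
  induction j with
  | zero => simp
  | succ m ih =>
    have hm : m < k := by omega
    have h1 : finRotate k ⟨m, hm⟩ = ⟨m + 1, hj⟩ := by
      apply Fin.ext
      rw [val_finRotate hk]
      exact Nat.mod_eq_of_lt hj
    have := hcond ⟨m, hm⟩
    rw [h1, ih hm] at this
    rw [← this, pow_succ', Equiv.Perm.mul_apply]

lemma tuple_card {n : ℕ} (σ : Equiv.Perm (Fin n)) {k : ℕ} (hk : 2 ≤ k) :
    (Finset.univ.filter fun i : Fin k → Fin n =>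
        Function.Injective i ∧ ∀ j, σ (i j) = i (finRotate k j)).card
    = (Finset.univ.filter fun x : Fin n =>
        σ x ≠ x ∧ (σ.cycleOf x).support.card = k).card := by
  apply Finset.card_bij (fun i _ => i ⟨0, by omega⟩)
  · rintro i hi
    simp only [mem_filter, mem_univ, true_and] at hi ⊢
    obtain ⟨hinj, hcond⟩ := hi
    set x := i ⟨0, by omega⟩ with hx
    have hσx : σ x ≠ x := by
      have h := hcond ⟨0, by omega⟩
      have h1 : finRotate k ⟨0, by omega⟩ = ⟨1, by omega⟩ := by
        apply Fin.ext
        rw [val_finRotate hk]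
        simp only [Fin.val_mk]
        rw [Nat.mod_eq_of_lt (by omega)]
      rw [h1] at h
      rw [← hx] at h
      rw [h]
      intro hc
      exact absurd (congrArg Fin.val (hinj hc)) (by simp)
    refine ⟨hσx, ?_⟩
    have hxmem : x ∈ (σ.cycleOf x).support := by
      rw [Equiv.Perm.mem_support_cycleOf_iff]
      exact ⟨Equiv.Perm.SameCycle.refl _ _, Equiv.Perm.mem_support.2 hσx⟩
    have hcycle := σ.isCycleOn_support_cycleOf x
    have hpowk : (σ ^ k) x = x := by
      have hlast := hcond ⟨k-1, by omega⟩
      have h1 : finRotate k ⟨k-1, by omega⟩ = ⟨0, by omega⟩ := by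
        apply Fin.ext
        rw [val_finRotate hk]
        simp only [Fin.val_mk]
        rw [Nat.sub_add_cancel (by omega), Nat.mod_self]
      rw [h1, tuple_eq_pow hk σ i hcond ⟨k-1, by omega⟩] at hlast
      calc (σ ^ k) x = σ ((σ ^ (k-1)) x) := by
            rw [← Equiv.Perm.mul_apply, ← pow_succ']; congr 2; omega
        _ = x := hlast
    have hdvd : (σ.cycleOf x).support.card ∣ k := (hcycle.pow_apply_eq hxmem).1 hpowk
    set d := (σ.cycleOf x).support.card with hd
    have hd2 : 2 ≤ d := Equiv.Perm.two_le_card_support_cycleOf_iff.2 hσx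
    by_contra hne
    have hdlt : d < k := lt_of_le_of_ne (Nat.le_of_dvd (by omega) hdvd) hne
    have heq : i ⟨d, hdlt⟩ = i ⟨0, by omega⟩ := by
      rw [tuple_eq_pow hk σ i hcond ⟨d, hdlt⟩]
      exact (hcycle.pow_apply_eq hxmem).2 dvd_rfl
    have := congrArg Fin.val (hinj heq)
    simp only [Fin.val_mk] at this
    omega
  · rintro i₁ h₁ i₂ h₂ h
    simp only [mem_filter, mem_univ, true_and] at h₁ h₂
    funext j
    rw [tuple_eq_pow hk σ i₁ h₁.2 j, tuple_eq_pow hk σ i₂ h₂.2 j, h]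
  · rintro x hx
    simp only [mem_filter, mem_univ, true_and] at hx
    obtain ⟨hσx, hcard⟩ := hx
    have hxmem : x ∈ (σ.cycleOf x).support := by
      rw [Equiv.Perm.mem_support_cycleOf_iff]
      exact ⟨Equiv.Perm.SameCycle.refl _ _, Equiv.Perm.mem_support.2 hσx⟩
    have hcycle := σ.isCycleOn_support_cycleOf x
    refine ⟨fun j => (σ ^ (j : ℕ)) x, ?_, by simp⟩
    simp only [mem_filter, mem_univ, true_and]
    constructor
    · intro j₁ j₂ hj
      have := (hcycle.pow_apply_eq_pow_apply hxmem).1 hj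
      rw [hcard] at this
      exact Fin.ext (by
        simpa [Nat.ModEq, Nat.mod_eq_of_lt j₁.isLt, Nat.mod_eq_of_lt j₂.isLt] using this)
    · intro j
      rw [← Equiv.Perm.mul_apply, ← pow_succ']
      show (σ ^ (j.val + 1)) x = (σ ^ ((finRotate k j : Fin k) : ℕ)) x
      rw [val_finRotate hk]
      have h2 := σ.pow_mod_card_support_cycleOf_self_apply (j.val + 1) x
      rw [hcard] at h2
      exact h2.symm

lemma pointwise_nat {n : ℕ} (σ : Equiv.Perm (Fin n)) :
    (Finset.univ.filter fun x : Fin n => σ x ≠ x).card =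
      ∑ k ∈ Finset.Icc 2 n, (Finset.univ.filter fun i : Fin k → Fin n =>
        Function.Injective i ∧ ∀ j, σ (i j) = i (finRotate k j)).card := by
  rw [Finset.card_eq_sum_card_fiberwise
      (f := fun x => (σ.cycleOf x).support.card) (t := Finset.Icc 2 n) ?_]
  · refine Finset.sum_congr rfl fun k hk => ?_
    rw [tuple_card σ (Finset.mem_Icc.1 hk).1, Finset.filter_filter]
  · intro x hx
    simp only [mem_coe, mem_filter, mem_univ, true_and] at hx
    rw [Finset.mem_coe, Finset.mem_Icc]
    refine ⟨Equiv.Perm.two_le_card_support_cycleOf_iff.2 hx, ?_⟩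
    calc (σ.cycleOf x).support.card ≤ Fintype.card (Fin n) := Finset.card_le_univ _
      _ = n := Fintype.card_fin n

lemma pointwise_real {n : ℕ} (π πs : Equiv.Perm (Fin n)) :
    ((Finset.univ.filter fun x : Fin n => π x ≠ πs x).card : ℝ) =
      ∑ k ∈ Finset.Icc 2 n,
        ∑ i ∈ Finset.univ.filter (fun i : Fin k → Fin n => Function.Injective i),
          if (∀ j : Fin k, π (i j) = πs (i (finRotate k j))) then (1:ℝ) else 0 := by
  set σ := πs⁻¹ * π with hσ
  have hfix : ∀ x y, π x = πs y ↔ σ x = y := fun x y => by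
    rw [hσ, Equiv.Perm.mul_apply, Equiv.Perm.inv_eq_iff_eq, eq_comm]
  have h1 : (Finset.univ.filter fun x : Fin n => π x ≠ πs x)
      = Finset.univ.filter fun x : Fin n => σ x ≠ x := by
    apply Finset.filter_congr
    intro x _
    rw [not_iff_not, hfix]
  have h2 : ∀ k, ∑ i ∈ Finset.univ.filter (fun i : Fin k → Fin n => Function.Injective i),
      (if (∀ j : Fin k, π (i j) = πs (i (finRotate k j))) then (1:ℝ) else 0)
      = ((Finset.univ.filter fun i : Fin k → Fin n =>
          Function.Injective i ∧ ∀ j, σ (i j) = i (finRotate k j)).card : ℝ) := by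
    intro k
    rw [Finset.sum_boole, Finset.filter_filter]
    congr 2
    apply Finset.filter_congr
    intro i _
    simp_rw [hfix]
  rw [h1]
  simp_rw [h2]
  rw [← Nat.cast_sum]
  exact_mod_cast congrArg (Nat.cast (R := ℝ)) (pointwise_nat σ)

/-- Cycle decomposition of the expected number of mismatches. -/
theorem stmt0 (n : ℕ) (Ω : Type*) [MeasurableSpace Ω] (P : Measure Ω)
    [IsProbabilityMeasure P] (πh : Ω → Equiv.Perm (Fin n)) (hmeas : Measurable πh)
    (πs : Equiv.Perm (Fin n)) :
    ∫ ω, ((Finset.univ.filter fun i : Fin n => πh ω i ≠ πs i).card : ℝ) ∂P =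
      ∑ k ∈ Finset.Icc 2 n,
        ∑ i ∈ Finset.univ.filter (fun i : Fin k → Fin n => Function.Injective i),
          (P {ω | ∀ j : Fin k, πh ω (i j) = πs (i (finRotate k j))}).toReal := by
  have hms : ∀ (k : ℕ) (i : Fin k → Fin n),
      MeasurableSet {ω | ∀ j : Fin k, πh ω (i j) = πs (i (finRotate k j))} := by
    intro k i
    have h : {ω | ∀ j : Fin k, πh ω (i j) = πs (i (finRotate k j))}
        = πh ⁻¹' {σ : Equiv.Perm (Fin n) |
            ∀ j : Fin k, σ (i j) = πs (i (finRotate k j))} := rfl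
    rw [h]
    exact hmeas MeasurableSpace.measurableSet_top
  have hintegrand : (fun ω => ((Finset.univ.filter fun i : Fin n => πh ω i ≠ πs i).card : ℝ))
      = fun ω => ∑ k ∈ Finset.Icc 2 n,
          ∑ i ∈ Finset.univ.filter (fun i : Fin k → Fin n => Function.Injective i),
            Set.indicator {ω' | ∀ j : Fin k, πh ω' (i j) = πs (i (finRotate k j))}
              (fun _ => (1:ℝ)) ω := by
    funext ω
    rw [pointwise_real (πh ω) πs]
    refine Finset.sum_congr rfl fun k _ => Finset.sum_congr rfl fun i _ => ?_
    rw [Set.indicator_apply]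
    exact if_congr Iff.rfl rfl rfl
  rw [hintegrand, MeasureTheory.integral_finset_sum _ (fun k _ =>
    integrable_finset_sum _ (fun i _ => (integrable_const (1:ℝ)).indicator (hms k i)))]
  refine Finset.sum_congr rfl fun k _ => ?_
  rw [MeasureTheory.integral_finset_sum _ (fun i _ =>
    (integrable_const (1:ℝ)).indicator (hms k i))]
  exact Finset.sum_congr rfl fun i _ => MeasureTheory.integral_indicator_one (hms k i)
end

section
/- In the special case k = 2: for independent W ~ N(μ, I_2), Z ~ N(ν, I_2) with θμ = ν for some θ ∈ (0,1], and t = (1−ε)/2 with ε ∈ (0,1), the moment generating function satisfies E[exp(tθ Wᵀ(C−I_2)Z)] ≤ exp(−((1−ε)/8)·‖(I_2 − C)ν‖² + K·log(1/ε)) for some absolute constant K > 0, where C is the 2×2 swap matrix. -/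
open Matrix MeasureTheory ProbabilityTheory
open Real
open scoped NNReal ENNReal

/-- The `2 × 2` swap matrix. -/
def swapMatrix : Matrix (Fin 2) (Fin 2) ℝ := !![0, 1; 1, 0]

lemma cexp_eq_ofReal (B C D x : ℝ) : Complex.exp ((B:ℂ) * x^2 + C*x + D)
    = ((rexp (B*x^2 + C*x + D) : ℝ) : ℂ) := by
  have h1 : ((B:ℂ) * x^2 + C*x + D) = ((B*x^2 + C*x + D : ℝ) : ℂ) := by push_cast; ring
  rw [h1, Complex.ofReal_exp]

lemma my_integrable_rexp_quadratic {B : ℝ} (hB : B < 0) (C D : ℝ) :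
    Integrable fun x : ℝ => rexp (B*x^2 + C*x + D) := by
  have h := (integrable_cexp_quadratic' (b := (B:ℂ)) (by simpa using hB) C D).re
  refine h.congr (ae_of_all _ fun x => ?_)
  show (Complex.exp ((B:ℂ) * x^2 + C*x + D)).re = _
  rw [cexp_eq_ofReal, Complex.ofReal_re]

lemma my_integral_rexp_quadratic {B : ℝ} (hB : B < 0) (C D : ℝ) :
    ∫ x : ℝ, rexp (B*x^2 + C*x + D) = Real.sqrt (π / (-B)) * rexp (D - C^2/(4*B)) := by
  have h := integral_cexp_quadratic (b := (B:ℂ)) (by simpa using hB) C D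
  have h1 : (∫ x : ℝ, Complex.exp ((B:ℂ) * x^2 + C*x + D))
      = ((∫ x : ℝ, rexp (B*x^2 + C*x + D) : ℝ) : ℂ) := by
    calc (∫ x : ℝ, Complex.exp ((B:ℂ) * x^2 + C*x + D))
        = ∫ x : ℝ, ((rexp (B*x^2 + C*x + D) : ℝ) : ℂ) := by simp only [cexp_eq_ofReal]
      _ = ((∫ x : ℝ, rexp (B*x^2 + C*x + D) : ℝ) : ℂ) := integral_ofReal
  rw [h1] at h
  have hBpos : (0:ℝ) < -B := neg_pos.2 hB
  have h2 : ((π : ℂ) / -(B:ℂ)) ^ (1/2 : ℂ) = ((Real.sqrt (π / (-B)) : ℝ) : ℂ) := by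
    have hpos : (0:ℝ) ≤ π / (-B) := div_nonneg pi_pos.le hBpos.le
    rw [Real.sqrt_eq_rpow, Complex.ofReal_cpow hpos]
    push_cast
    norm_num
  have h3 : Complex.exp ((D:ℂ) - (C:ℂ)^2/(4*(B:ℂ))) = ((rexp (D - C^2/(4*B)) : ℝ) : ℂ) := by
    have : ((D:ℂ) - (C:ℂ)^2/(4*(B:ℂ))) = ((D - C^2/(4*B) : ℝ) : ℂ) := by push_cast; ring
    rw [this, Complex.ofReal_exp]
  rw [h2, h3, ← Complex.ofReal_mul] at h
  exact_mod_cast h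

/-- `∫ exp(a x² + b x)` against `N(m,1)`. -/
lemma lintegral_gauss_quadratic (m : ℝ) {a : ℝ} (b : ℝ) (ha : a < 1/2) :
    ∫⁻ x, ENNReal.ofReal (rexp (a*x^2 + b*x)) ∂(gaussianReal m 1)
      = ENNReal.ofReal
          ((Real.sqrt (1-2*a))⁻¹ * rexp ((b+m)^2/(2*(1-2*a)) - m^2/2)) := by
  have ha2 : (0:ℝ) < 1 - 2*a := by linarith
  have hB : a - 1/2 < 0 := by linarith
  rw [gaussianReal_of_var_ne_zero _ one_ne_zero,
    lintegral_withDensity_eq_lintegral_mul _ (measurable_gaussianPDF _ _)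
      (by fun_prop)]
  have hpt : ∀ x : ℝ, (gaussianPDF m 1 * fun x => ENNReal.ofReal (rexp (a*x^2 + b*x))) x
      = ENNReal.ofReal ((Real.sqrt (2*π))⁻¹
          * rexp ((a-1/2)*x^2 + (b+m)*x + (-(m^2)/2))) := by
    intro x
    simp only [Pi.mul_apply, gaussianPDF, gaussianPDFReal]
    rw [← ENNReal.ofReal_mul (by positivity)]
    congr 1
    rw [mul_assoc, ← Real.exp_add]
    have hc : Real.sqrt (2*π*((1:ℝ≥0):ℝ)) = Real.sqrt (2*π) := by norm_num
    rw [hc]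
    congr 1
    push_cast
    ring
  simp_rw [hpt]
  rw [← ofReal_integral_eq_lintegral_ofReal
      ((my_integrable_rexp_quadratic hB (b+m) (-(m^2)/2)).const_mul _)
      (ae_of_all _ fun x => by positivity)]
  rw [integral_const_mul, my_integral_rexp_quadratic hB]
  congr 1
  have hne : a - 1/2 ≠ 0 := ne_of_lt hB
  have hne2 : (1:ℝ) - 2*a ≠ 0 := ne_of_gt ha2
  have e1 : -(m^2)/2 - (b+m)^2/(4*(a-1/2)) = (b+m)^2/(2*(1-2*a)) - m^2/2 := by
    rw [show (4:ℝ)*(a-1/2) = -(2*(1-2*a)) by ring, div_neg, sub_neg_eq_add]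
    ring
  rw [e1, ← mul_assoc]
  congr 1
  rw [← Real.sqrt_inv, ← Real.sqrt_inv, ← Real.sqrt_mul (by positivity)]
  rw [show (2*π)⁻¹ * (π / -(a-1/2)) = (1-2*a)⁻¹ by
    rw [show -(a-1/2) = (1-2*a)/2 by ring, div_div_eq_mul_div, mul_comm ((2*π)⁻¹),
      div_mul_eq_mul_div, mul_comm π 2, mul_inv_cancel₀ (by positivity : (2*π:ℝ) ≠ 0),
      one_div]]

lemma lintegral_gauss_linear (m b : ℝ) :
    ∫⁻ x, ENNReal.ofReal (rexp (b*x)) ∂(gaussianReal m 1)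
      = ENNReal.ofReal (rexp (b*m + b^2/2)) := by
  calc ∫⁻ x, ENNReal.ofReal (rexp (b*x)) ∂(gaussianReal m 1)
      = ∫⁻ x, ENNReal.ofReal (rexp (0*x^2 + b*x)) ∂(gaussianReal m 1) := by
        simp
    _ = ENNReal.ofReal ((Real.sqrt (1-2*0))⁻¹
          * rexp ((b+m)^2/(2*(1-2*0)) - m^2/2)) :=
        lintegral_gauss_quadratic m b (by norm_num)
    _ = ENNReal.ofReal (rexp (b*m + b^2/2)) := by
        norm_num
        congr 1
        ring

lemma lintegral_pi_fin_two (μ : Fin 2 → Measure ℝ) [∀ i, SigmaFinite (μ i)]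
    {f : (Fin 2 → ℝ) → ℝ≥0∞} (hf : Measurable f) :
    ∫⁻ x, f x ∂(Measure.pi μ) = ∫⁻ a, ∫⁻ b, f ![a, b] ∂(μ 1) ∂(μ 0) := by
  have h := ((measurePreserving_piFinTwo μ).symm _).lintegral_comp hf
  rw [← h, lintegral_prod (fun p => f ((MeasurableEquiv.piFinTwo fun _ => ℝ).symm p))
    ((hf.comp (MeasurableEquiv.measurable _)).aemeasurable)]
  congr 1

lemma inner_z (νv : Fin 2 → ℝ) (lam : ℝ) :
    ∫⁻ z : Fin 2 → ℝ, ENNReal.ofReal (rexp (lam * (z 1 - z 0)))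
        ∂(Measure.pi fun i => gaussianReal (νv i) 1)
      = ENNReal.ofReal (rexp (lam * (νv 1 - νv 0) + lam^2)) := by
  rw [lintegral_pi_fin_two _ (by fun_prop)]
  simp only [Matrix.cons_val_one, Matrix.head_cons, Matrix.cons_val_zero]
  have hpt : ∀ a b : ℝ, ENNReal.ofReal (rexp (lam * (b - a)))
      = ENNReal.ofReal (rexp (-lam*a)) * ENNReal.ofReal (rexp (lam*b)) := by
    intro a b
    rw [← ENNReal.ofReal_mul (Real.exp_nonneg _), ← Real.exp_add]
    congr 2
    ring
  simp_rw [hpt, lintegral_const_mul' _ _ ENNReal.ofReal_ne_top, lintegral_gauss_linear,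
    lintegral_mul_const' _ _ ENNReal.ofReal_ne_top, lintegral_gauss_linear,
    ← ENNReal.ofReal_mul (Real.exp_nonneg _), ← Real.exp_add]
  congr 2
  ring

lemma main_value {s : ℝ} (hs : s^2 < 1/4) (μv νv : Fin 2 → ℝ) :
    ∫⁻ w : Fin 2 → ℝ, (∫⁻ z : Fin 2 → ℝ,
        ENNReal.ofReal (rexp (s * (w 0 - w 1) * (z 1 - z 0)))
        ∂(Measure.pi fun i => gaussianReal (νv i) 1))
        ∂(Measure.pi fun i => gaussianReal (μv i) 1)
      = ENNReal.ofReal ((Real.sqrt (1-4*s^2))⁻¹ *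
          rexp ((s^2*((μv 0 - μv 1)^2 + (νv 1 - νv 0)^2)
            + s*(μv 0 - μv 1)*(νv 1 - νv 0))/(1-4*s^2))) := by
  have h2s : (0:ℝ) < 1 - 2*s^2 := by nlinarith
  have h4s : (0:ℝ) < 1 - 4*s^2 := by nlinarith
  have h2s' : (1:ℝ) - 2*s^2 ≠ 0 := ne_of_gt h2s
  have h4s' : (1:ℝ) - 4*s^2 ≠ 0 := ne_of_gt h4s
  set d : ℝ := νv 1 - νv 0 with hd
  set m1 : ℝ := μv 1 with hm1
  set m0 : ℝ := μv 0 with hm0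
  simp_rw [inner_z]
  rw [lintegral_pi_fin_two _ (by fun_prop)]
  simp only [Matrix.cons_val_one, Matrix.head_cons, Matrix.cons_val_zero]
  set A : ℝ := s^2/(1-2*s^2) with hA
  set Bc : ℝ := s*d - 2*s^2*(m1 - s*d)/(1-2*s^2) with hBc
  set Cc : ℝ := (m1-s*d)^2/(2*(1-2*s^2)) - m1^2/2 with hCc
  have hApos : A < 1/2 := by
    rw [hA, div_lt_iff₀ h2s]
    nlinarith
  have hpt : ∀ a b : ℝ, ENNReal.ofReal (rexp (s * (a - b) * d + (s * (a - b))^2))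
      = ENNReal.ofReal (rexp (s*d*a + s^2*a^2))
        * ENNReal.ofReal (rexp (s^2*b^2 + (-(s*d) - 2*s^2*a)*b)) := by
    intro a b
    rw [← ENNReal.ofReal_mul (Real.exp_nonneg _), ← Real.exp_add]
    congr 2
    ring
  rw [← hd, ← hm1, ← hm0]
  simp_rw [hpt, lintegral_const_mul' _ _ ENNReal.ofReal_ne_top,
    lintegral_gauss_quadratic m1 _ (by nlinarith : s^2 < 1/2)]
  have hpt2 : ∀ a : ℝ, ENNReal.ofReal (rexp (s*d*a + s^2*a^2))
        * ENNReal.ofReal ((Real.sqrt (1-2*s^2))⁻¹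
            * rexp ((-(s*d) - 2*s^2*a + m1)^2/(2*(1-2*s^2)) - m1^2/2))
      = ENNReal.ofReal ((Real.sqrt (1-2*s^2))⁻¹ * rexp Cc)
        * ENNReal.ofReal (rexp (A*a^2 + Bc*a)) := by
    intro a
    rw [← ENNReal.ofReal_mul (Real.exp_nonneg _), ← ENNReal.ofReal_mul (by positivity)]
    congr 1
    have key : rexp (s*d*a + s^2*a^2)
          * rexp ((-(s*d) - 2*s^2*a + m1)^2/(2*(1-2*s^2)) - m1^2/2)
        = rexp Cc * rexp (A*a^2 + Bc*a) := by
      rw [← Real.exp_add, ← Real.exp_add]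
      congr 1
      rw [hCc, hA, hBc]
      have e1 : (1:ℝ) - s^2*2 ≠ 0 := by intro h; apply h2s'; linarith
      field_simp
      ring
    calc rexp (s*d*a + s^2*a^2) * ((Real.sqrt (1-2*s^2))⁻¹
            * rexp ((-(s*d) - 2*s^2*a + m1)^2/(2*(1-2*s^2)) - m1^2/2))
        = (Real.sqrt (1-2*s^2))⁻¹ * (rexp (s*d*a + s^2*a^2)
            * rexp ((-(s*d) - 2*s^2*a + m1)^2/(2*(1-2*s^2)) - m1^2/2)) := by ring
      _ = (Real.sqrt (1-2*s^2))⁻¹ * rexp Cc * rexp (A*a^2 + Bc*a) := by rw [key]; ring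
  simp_rw [hpt2, lintegral_const_mul' _ _ ENNReal.ofReal_ne_top,
    lintegral_gauss_quadratic m0 _ hApos]
  rw [← ENNReal.ofReal_mul (by positivity)]
  congr 1
  have hsq : (Real.sqrt (1-2*s^2))⁻¹ * (Real.sqrt (1-2*A))⁻¹
      = (Real.sqrt (1-4*s^2))⁻¹ := by
    rw [← Real.sqrt_inv, ← Real.sqrt_inv, ← Real.sqrt_mul (by positivity), ← Real.sqrt_inv]
    congr 1
    rw [← mul_inv]
    congr 1
    rw [hA]
    field_simp
    ring
  calc (Real.sqrt (1-2*s^2))⁻¹ * rexp Cc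
        * ((Real.sqrt (1-2*A))⁻¹ * rexp ((Bc+m0)^2/(2*(1-2*A)) - m0^2/2))
      = ((Real.sqrt (1-2*s^2))⁻¹ * (Real.sqrt (1-2*A))⁻¹)
        * (rexp Cc * rexp ((Bc+m0)^2/(2*(1-2*A)) - m0^2/2)) := by ring
    _ = (Real.sqrt (1-4*s^2))⁻¹
        * rexp ((s^2*((m0 - m1)^2 + d^2) + s*(m0 - m1)*d)/(1-4*s^2)) := by
        rw [hsq, ← Real.exp_add]
        congr 1
        have h2A : (1:ℝ) - 2*A = (1-4*s^2)/(1-2*s^2) := by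
          rw [hA]; field_simp; ring
        rw [h2A, hCc, hBc]
        have e1 : (1:ℝ) - s^2*2 ≠ 0 := by intro h; apply h2s'; linarith
        have e2 : (1:ℝ) - s^2*4 ≠ 0 := by intro h; apply h4s'; linarith
        congr 1
        field_simp
        ring

lemma final_ineq {θ ε : ℝ} (m : ℝ) (hθ0 : 0 < θ) (hθ1 : θ ≤ 1) (hε0 : 0 < ε) (hε1 : ε < 1) :
    (Real.sqrt (1-4*((1-ε)/2*θ)^2))⁻¹ *
      rexp ((((1-ε)/2*θ)^2*(m^2 + (-(θ*m))^2) + ((1-ε)/2*θ)*m*(-(θ*m)))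
        /(1-4*((1-ε)/2*θ)^2))
      ≤ rexp (-((1-ε)/8)*(2*(θ*m)^2) + (1/2) * Real.log (1/ε)) := by
  have hθ2 : θ^2 ≤ 1 := by nlinarith
  have hu_ge : ε ≤ 1-4*((1-ε)/2*θ)^2 := by
    nlinarith [mul_le_of_le_one_right (sq_nonneg (1-ε)) hθ2]
  have hu0 : (0:ℝ) < 1-4*((1-ε)/2*θ)^2 := lt_of_lt_of_le hε0 hu_ge
  have hsqrt : (Real.sqrt (1-4*((1-ε)/2*θ)^2))⁻¹
      = rexp (-(Real.log (1-4*((1-ε)/2*θ)^2) / 2)) := by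
    rw [Real.exp_neg]
    congr 1
    rw [← Real.exp_log (Real.sqrt_pos.2 hu0), Real.log_sqrt hu0.le]
  rw [hsqrt, ← Real.exp_add]
  apply Real.exp_le_exp.mpr
  have hb : -(Real.log (1-4*((1-ε)/2*θ)^2) / 2) ≤ (1/2) * Real.log (1/ε) := by
    rw [one_div ε, Real.log_inv]
    have := Real.log_le_log hε0 hu_ge
    linarith
  have ha : (((1-ε)/2*θ)^2*(m^2 + (-(θ*m))^2) + ((1-ε)/2*θ)*m*(-(θ*m)))
        /(1-4*((1-ε)/2*θ)^2) ≤ -((1-ε)/8)*(2*(θ*m)^2) := by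
    rw [div_le_iff₀ hu0]
    have h2 : (0:ℝ) < 1 - (1-ε)*θ^2 := by nlinarith
    have key : (-((1-ε)/8)*(2*(θ*m)^2)) * (1-4*((1-ε)/2*θ)^2)
        - (((1-ε)/2*θ)^2*(m^2 + (-(θ*m))^2) + ((1-ε)/2*θ)*m*(-(θ*m)))
        = θ^2*m^2*(1-ε)*ε*(1-(1-ε)*θ^2)/4 := by ring
    nlinarith [mul_nonneg (mul_nonneg (mul_nonneg
      (mul_nonneg (sq_nonneg θ) (sq_nonneg m)) (by linarith : (0:ℝ) ≤ 1-ε))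
      hε0.le) h2.le]
  linarith

/-- MGF bound in the case `k = 2`: for independent `W ~ N(μ, I₂)`, `Z ~ N(ν, I₂)` with
`θμ = ν`, `θ ∈ (0,1]`, and `t = (1−ε)/2`,
`E[exp(tθ Wᵀ(C−I₂)Z)] ≤ exp(−((1−ε)/8)‖(I₂−C)ν‖² + K log(1/ε))` for an absolute
constant `K > 0`. -/
theorem stmt8 :
    ∃ K : ℝ, 0 < K ∧
      ∀ (Ω : Type) [MeasurableSpace Ω] (P : Measure Ω), IsProbabilityMeasure P →
        ∀ (W Z : Ω → Fin 2 → ℝ) (μv νv : Fin 2 → ℝ) (θ ε : ℝ),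
          0 < θ → θ ≤ 1 → 0 < ε → ε < 1 →
          Measure.map W P = (Measure.pi fun i => gaussianReal (μv i) 1) →
          Measure.map Z P = (Measure.pi fun i => gaussianReal (νv i) 1) →
          IndepFun W Z P → (∀ i, θ * μv i = νv i) →
          (∫ ω, Real.exp (((1 - ε) / 2) * θ *
              dotProduct (W ω) ((swapMatrix - 1).mulVec (Z ω))) ∂P) ≤
            Real.exp (-((1 - ε) / 8) * (∑ i, (((1 - swapMatrix).mulVec νv) i) ^ 2) +
              K * Real.log (1 / ε)) := by
  refine ⟨1/2, by norm_num, ?_⟩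
  intro Ω _ P hP W Z μv νv θ ε hθ0 hθ1 hε0 hε1 hW hZ hInd hθμ
  have hWm : AEMeasurable W P := by
    by_contra h
    rw [Measure.map_of_not_aemeasurable h] at hW
    have h1 := congrArg (fun μ : Measure (Fin 2 → ℝ) => μ Set.univ) hW
    simp [measure_univ] at h1
  have hZm : AEMeasurable Z P := by
    by_contra h
    rw [Measure.map_of_not_aemeasurable h] at hZ
    have h1 := congrArg (fun μ : Measure (Fin 2 → ℝ) => μ Set.univ) hZ
    simp [measure_univ] at h1
  have hdot : ∀ (w z : Fin 2 → ℝ),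
      dotProduct w ((swapMatrix - 1).mulVec z) = (w 0 - w 1) * (z 1 - z 0) := by
    intro w z
    simp [swapMatrix, dotProduct, Matrix.mulVec, Fin.sum_univ_two, Matrix.sub_apply,
      Matrix.one_apply]
    ring
  have hsum : (∑ i, (((1 - swapMatrix).mulVec νv) i) ^ 2)
      = 2*(θ*(μv 0 - μv 1))^2 := by
    simp [swapMatrix, Matrix.mulVec, dotProduct, Fin.sum_univ_two, Matrix.sub_apply,
      Matrix.one_apply]
    rw [← hθμ 0, ← hθμ 1]
    ring
  have hex : ∀ ω, ((1 - ε) / 2) * θ *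
      dotProduct (W ω) ((swapMatrix - 1).mulVec (Z ω))
      = ((1-ε)/2*θ) * (W ω 0 - W ω 1) * (Z ω 1 - Z ω 0) := by
    intro ω
    rw [hdot]
    ring
  simp_rw [hex]
  set s : ℝ := (1-ε)/2*θ with hs_def
  have hs : s^2 < 1/4 := by
    rw [hs_def]
    have h1 : θ^2 ≤ 1 := by nlinarith
    nlinarith [mul_le_of_le_one_right (sq_nonneg (1-ε)) h1]
  have hF : Measurable (fun p : (Fin 2 → ℝ) × (Fin 2 → ℝ) =>
      rexp (s * (p.1 0 - p.1 1) * (p.2 1 - p.2 0))) := by fun_prop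
  have hpair : AEMeasurable (fun ω => (W ω, Z ω)) P := hWm.prodMk hZm
  have hmeasInt : AEStronglyMeasurable
      (fun ω => rexp (s * (W ω 0 - W ω 1) * (Z ω 1 - Z ω 0))) P :=
    (hF.comp_aemeasurable hpair).aestronglyMeasurable
  rw [integral_eq_lintegral_of_nonneg_ae (ae_of_all _ fun ω => (Real.exp_pos _).le) hmeasInt]
  refine ENNReal.toReal_le_of_le_ofReal (Real.exp_pos _).le ?_
  have hmap : ∫⁻ ω, ENNReal.ofReal (rexp (s * (W ω 0 - W ω 1) * (Z ω 1 - Z ω 0))) ∂P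
      = ∫⁻ p : (Fin 2 → ℝ) × (Fin 2 → ℝ),
          ENNReal.ofReal (rexp (s * (p.1 0 - p.1 1) * (p.2 1 - p.2 0)))
          ∂((Measure.map W P).prod (Measure.map Z P)) := by
    rw [← (indepFun_iff_map_prod_eq_prod_map_map hWm hZm).mp hInd,
      lintegral_map' hF.ennreal_ofReal.aemeasurable hpair]
  rw [hmap, hW, hZ, lintegral_prod _ hF.ennreal_ofReal.aemeasurable]
  rw [main_value hs μv νv]
  apply ENNReal.ofReal_le_ofReal
  have hν : νv 1 - νv 0 = -(θ*(μv 0 - μv 1)) := by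
    rw [← hθμ 0, ← hθμ 1]
    ring
  rw [hν, hsum, hs_def]
  have := final_ineq (μv 0 - μv 1) hθ0 hθ1 hε0 hε1
  convert this using 3
end
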